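/- Consider a 2^K factorial experiment with N = r·2^K units (r ≥ 2), where the assignment W is drawn uniformly from all ways of assigning the N units to the J = 2^K treatment combinations z ∈ {+1,−1}^K with exactly r units per combination. Under Fisher's sharp null hypothesis the outcome of unit i is a fixed constant y_i regardless of assignment. Let Ȳ^{obs}(z) be the mean of y_i over the r units assigned to z, let g₁(z) = z₁, and let τ̂₁(W, Y^{obs}) = 2^{−(K−1)} Σ_{z ∈ {+1,−1}^K} g₁(z) Ȳ^{obs}(z). Then E[τ̂₁(W, Y^{obs})] = 0 and Var[τ̂₁(W, Y^{obs})] = J s² / (2^{2(K−1)} r), where s² = (1/(N−1))Σ_{i=1}^N (y_i − ȳ)² and ȳ = (1/N)Σ_{i=1}^N y_i. -/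

import Mathlib

open Finset

noncomputable section

/-- The set of completely randomized `2^K` factorial assignments of `N` units:
functions from units to treatment combinations `z ∈ {+1,−1}^K` (encoded as
`Fin K → Bool`) with every combination received by exactly `r` units. -/
def FactDesign (N K r : ℕ) : Finset (Fin N → (Fin K → Bool)) :=
  Finset.univ.filter fun W => ∀ z : Fin K → Bool,
    (Finset.univ.filter fun i => W i = z).card = r

/-- Expectation over the uniform distribution on `FactDesign N K r`. -/
noncomputable def factExp (N K r : ℕ) (f : (Fin N → (Fin K → Bool)) → ℝ) : ℝ :=
  (∑ W ∈ FactDesign N K r, f W) / ((FactDesign N K r).card : ℝ)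

/-- Variance over the uniform distribution on `FactDesign N K r`. -/
noncomputable def factVar (N K r : ℕ) (f : (Fin N → (Fin K → Bool)) → ℝ) : ℝ :=
  factExp N K r fun W => (f W - factExp N K r f) ^ 2

/-- The estimated main effect of factor 1 under Fisher's sharp null (fixed
outcomes `y`): `τ̂₁(W, Yobs) = 2^{−(K−1)} Σ_z g₁(z) Ȳobs(z)` with `g₁(z) = z₁`
and `Ȳobs(z)` the mean outcome of the `r` units assigned to `z`. -/
noncomputable def tauhatFact (N K r : ℕ) (hK : 0 < K) (y : Fin N → ℝ)
    (W : Fin N → (Fin K → Bool)) : ℝ :=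
  ((2 : ℝ) ^ (K - 1))⁻¹ * ∑ z : Fin K → Bool,
    (if z ⟨0, hK⟩ then (1 : ℝ) else -1)
      * ((∑ i, if W i = z then y i else 0) / (r : ℝ))


section Aux
open Equiv
variable {N K r : ℕ}

lemma mem_fd {W : Fin N → (Fin K → Bool)} :
    W ∈ FactDesign N K r ↔ ∀ z, (Finset.univ.filter fun i => W i = z).card = r := by
  simp [FactDesign]

lemma fd_comp_perm (σ : Perm (Fin K → Bool)) {W : Fin N → (Fin K → Bool)}
    (hW : W ∈ FactDesign N K r) : (σ ∘ W) ∈ FactDesign N K r := by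
  rw [mem_fd] at hW ⊢
  intro z
  have h : (Finset.univ.filter fun i => (σ ∘ W) i = z)
      = Finset.univ.filter fun i => W i = σ.symm z := by
    apply filter_congr
    intro i _
    simp [Function.comp, ← Equiv.eq_symm_apply]
  rw [h]; exact hW _

lemma fd_comp_dom (σ : Perm (Fin N)) {W : Fin N → (Fin K → Bool)}
    (hW : W ∈ FactDesign N K r) : (W ∘ σ) ∈ FactDesign N K r := by
  rw [mem_fd] at hW ⊢
  intro z
  rw [← hW z]
  apply card_nbij' (fun i => σ i) (fun i => σ.symm i) <;>
    simp [Function.comp, Set.MapsTo, Set.LeftInvOn, Set.RightInvOn]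

lemma fd_nonempty (hN : N = r * 2 ^ K) : (FactDesign N K r).Nonempty := by
  have hcard : Fintype.card (Fin N) = Fintype.card (Fin r × (Fin K → Bool)) := by
    simp [hN]
  let e := Fintype.equivOfCardEq hcard
  refine ⟨fun i => (e i).2, ?_⟩
  rw [mem_fd]
  intro z
  have h : (Finset.univ.filter fun i => (e i).2 = z).card
      = (Finset.univ : Finset (Fin r)).card := by
    apply card_nbij' (fun i => (e i).1) (fun a => e.symm (a, z))
    · simp
    · intro a _
      simp [mem_filter]
    · intro i hi
      simp at hi
      rw [← hi]
      simp
    · intro a _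
      simp
  simpa using h


def cnt (N K r : ℕ) (i : Fin N) (z : Fin K → Bool) : ℕ :=
  ((FactDesign N K r).filter fun W => W i = z).card

def cnt2 (N K r : ℕ) (i j : Fin N) (z w : Fin K → Bool) : ℕ :=
  ((FactDesign N K r).filter fun W => W i = z ∧ W j = w).card

lemma cnt2_perm (σ : Perm (Fin K → Bool)) (i j : Fin N) (z w : Fin K → Bool) :
    cnt2 N K r i j z w = cnt2 N K r i j (σ z) (σ w) := by
  unfold cnt2
  apply card_nbij' (fun W => σ ∘ W) (fun W => σ.symm ∘ W)
  · intro W hW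
    simp only [mem_coe, mem_filter] at hW ⊢
    exact ⟨fd_comp_perm σ hW.1, by simp [Function.comp, hW.2.1], by simp [Function.comp, hW.2.2]⟩
  · intro W hW
    simp only [mem_coe, mem_filter] at hW ⊢
    refine ⟨fd_comp_perm σ.symm hW.1, ?_, ?_⟩
    · simp [Function.comp, hW.2.1]
    · simp [Function.comp, hW.2.2]
  · intro W _; funext x; simp
  · intro W _; funext x; simp

lemma cnt_perm (σ : Perm (Fin K → Bool)) (i : Fin N) (z : Fin K → Bool) :
    cnt N K r i z = cnt N K r i (σ z) := by
  unfold cnt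
  apply card_nbij' (fun W => σ ∘ W) (fun W => σ.symm ∘ W)
  · intro W hW
    simp only [mem_coe, mem_filter] at hW ⊢
    exact ⟨fd_comp_perm σ hW.1, by simp [Function.comp, hW.2]⟩
  · intro W hW
    simp only [mem_coe, mem_filter] at hW ⊢
    exact ⟨fd_comp_perm σ.symm hW.1, by simp [Function.comp, hW.2]⟩
  · intro W _; funext x; simp
  · intro W _; funext x; simp

lemma cnt2_dom {i j j' : Fin N} (hij : i ≠ j) (hij' : i ≠ j') (z w : Fin K → Bool) :
    cnt2 N K r i j z w = cnt2 N K r i j' z w := by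
  unfold cnt2
  apply card_nbij' (fun W => W ∘ (swap j j')) (fun W => W ∘ (swap j j'))
  · intro W hW
    simp only [mem_coe, mem_filter] at hW ⊢
    refine ⟨fd_comp_dom _ hW.1, ?_, ?_⟩
    · simpa [Function.comp, Equiv.swap_apply_of_ne_of_ne hij hij'] using hW.2.1
    · simpa [Function.comp, Equiv.swap_apply_right] using hW.2.2
  · intro W hW
    simp only [mem_coe, mem_filter] at hW ⊢
    refine ⟨fd_comp_dom _ hW.1, ?_, ?_⟩
    · simpa [Function.comp, Equiv.swap_apply_of_ne_of_ne hij hij'] using hW.2.1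
    · simpa [Function.comp, Equiv.swap_apply_left] using hW.2.2
  · intro W _; funext x; simp
  · intro W _; funext x; simp

lemma exists_perm_pair {α : Type*} [DecidableEq α] {z w z' w' : α} (hzw : z ≠ w) (h' : z' ≠ w') :
    ∃ σ : Perm α, σ z = z' ∧ σ w = w' := by
  refine ⟨(swap (swap z z' w) w') * (swap z z'), ?_, ?_⟩
  · have h1 : swap z z' w ≠ z' := by
      intro h
      exact hzw ((swap z z').injective (h.trans (Equiv.swap_apply_left z z').symm)).symm
    rw [Equiv.Perm.mul_apply, Equiv.swap_apply_left,
      Equiv.swap_apply_of_ne_of_ne h1.symm h']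
  · simp [Equiv.Perm.mul_apply, Equiv.swap_apply_left]

lemma sum_cnt (i : Fin N) : ∑ z : Fin K → Bool, cnt N K r i z = (FactDesign N K r).card := by
  unfold cnt
  calc ∑ z : Fin K → Bool, ((FactDesign N K r).filter fun W => W i = z).card
      = ∑ z : Fin K → Bool, ∑ W ∈ FactDesign N K r, if W i = z then 1 else 0 := by
        simp only [card_filter]
    _ = ∑ W ∈ FactDesign N K r, ∑ z : Fin K → Bool, if W i = z then 1 else 0 :=
        Finset.sum_comm
    _ = ∑ W ∈ FactDesign N K r, 1 := by
        apply Finset.sum_congr rfl; intro W _; simp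
    _ = (FactDesign N K r).card := by simp

lemma sum_cnt2_same (i : Fin N) (z : Fin K → Bool) :
    ∑ j ∈ Finset.univ.erase i, cnt2 N K r i j z z = cnt N K r i z * (r - 1) := by
  unfold cnt2 cnt
  simp only [card_filter]
  rw [Finset.sum_comm, Finset.sum_mul]
  apply Finset.sum_congr rfl
  intro W hW
  by_cases h : W i = z
  · have hmem : i ∈ Finset.univ.filter fun j => W j = z := by simp [h]
    have hc : ((Finset.univ.erase i).filter fun j => W j = z).card = r - 1 := by
      rw [filter_erase, card_erase_of_mem hmem, mem_fd.mp hW z]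
    calc (∑ j ∈ Finset.univ.erase i, if W i = z ∧ W j = z then 1 else 0)
        = ∑ j ∈ Finset.univ.erase i, if W j = z then 1 else 0 := by
          apply Finset.sum_congr rfl; intro j _; simp [h]
      _ = (if W i = z then 1 else 0) * (r - 1) := by
          rw [← card_filter, hc]; simp [h]
  · simp [h]


lemma sum_cnt2_diff (i : Fin N) {z w : Fin K → Bool} (hzw : z ≠ w) :
    ∑ j ∈ Finset.univ.erase i, cnt2 N K r i j z w = cnt N K r i z * r := by
  unfold cnt2 cnt
  simp only [card_filter]
  rw [Finset.sum_comm, Finset.sum_mul]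
  apply Finset.sum_congr rfl
  intro W hW
  by_cases h : W i = z
  · have hnmem : i ∉ Finset.univ.filter fun j => W j = w := by simp [h, hzw]
    have hc : ((Finset.univ.erase i).filter fun j => W j = w).card = r := by
      rw [filter_erase, Finset.erase_eq_of_notMem hnmem, mem_fd.mp hW w]
    calc (∑ j ∈ Finset.univ.erase i, if W i = z ∧ W j = w then 1 else 0)
        = ∑ j ∈ Finset.univ.erase i, if W j = w then 1 else 0 := by
          apply Finset.sum_congr rfl; intro j _; simp [h]
      _ = (if W i = z then 1 else 0) * r := by
          rw [← card_filter, hc]; simp [h]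
  · simp [h]

lemma cnt_eq (i : Fin N) (z z' : Fin K → Bool) : cnt N K r i z = cnt N K r i z' := by
  have := cnt_perm (swap z z') i z (N := N) (r := r)
  rwa [Equiv.swap_apply_left] at this

lemma J_mul_cnt (i : Fin N) (z : Fin K → Bool) :
    2 ^ K * cnt N K r i z = (FactDesign N K r).card := by
  rw [← sum_cnt i]
  have h : ∀ z' : Fin K → Bool, cnt N K r i z' = cnt N K r i z := fun z' => cnt_eq i z' z
  rw [Finset.sum_congr rfl fun z' _ => h z']
  simp [Finset.sum_const, Fintype.card_fun]

lemma cnt2_same_eq {i j : Fin N} (hij : i ≠ j) (z : Fin K → Bool) :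
    (N - 1) * cnt2 N K r i j z z = cnt N K r i z * (r - 1) := by
  rw [← sum_cnt2_same i z]
  have h : ∀ j' ∈ Finset.univ.erase i, cnt2 N K r i j' z z = cnt2 N K r i j z z := by
    intro j' hj'
    have : i ≠ j' := fun h => (Finset.mem_erase.mp hj').1 h.symm
    exact cnt2_dom this hij z z
  rw [Finset.sum_congr rfl h, Finset.sum_const]
  have : (Finset.univ.erase i).card = N - 1 := by
    rw [Finset.card_erase_of_mem (Finset.mem_univ i)]
    simp
  rw [this, smul_eq_mul]

lemma cnt2_diff_eq {i j : Fin N} (hij : i ≠ j) {z w : Fin K → Bool} (hzw : z ≠ w) :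
    (N - 1) * cnt2 N K r i j z w = cnt N K r i z * r := by
  rw [← sum_cnt2_diff i hzw]
  have h : ∀ j' ∈ Finset.univ.erase i, cnt2 N K r i j' z w = cnt2 N K r i j z w := by
    intro j' hj'
    have : i ≠ j' := fun h => (Finset.mem_erase.mp hj').1 h.symm
    exact cnt2_dom this hij z w
  rw [Finset.sum_congr rfl h, Finset.sum_const]
  have : (Finset.univ.erase i).card = N - 1 := by
    rw [Finset.card_erase_of_mem (Finset.mem_univ i)]
    simp
  rw [this, smul_eq_mul]

lemma cnt2_sameclass (i j : Fin N) (z z' : Fin K → Bool) :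
    cnt2 N K r i j z z = cnt2 N K r i j z' z' := by
  have := cnt2_perm (swap z z') i j z z (N := N) (r := r)
  rwa [Equiv.swap_apply_left] at this

lemma cnt2_diffclass (i j : Fin N) {z w z' w' : Fin K → Bool} (hzw : z ≠ w) (h' : z' ≠ w') :
    cnt2 N K r i j z w = cnt2 N K r i j z' w' := by
  obtain ⟨σ, h1, h2⟩ := exists_perm_pair hzw h'
  have := cnt2_perm σ i j z w (N := N) (r := r)
  rwa [h1, h2] at this


end Aux

set_option maxHeartbeats 1000000 in
/-- In a `2^K` factorial experiment with `N = r·2^K` units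
(`r ≥ 2`) under Fisher's sharp null, `E[τ̂₁(W, Yobs)] = 0` and
`Var[τ̂₁(W, Yobs)] = J s²/(2^{2(K−1)} r)` with `J = 2^K` and `s²` the sample
variance of all the outcomes. -/
theorem stmt18 (K r N : ℕ) (hK : 0 < K) (hr : 2 ≤ r) (hN : N = r * 2 ^ K)
    (y : Fin N → ℝ) :
    factExp N K r (tauhatFact N K r hK y) = 0 ∧
    factVar N K r (tauhatFact N K r hK y)
      = ((2 : ℝ) ^ K)
          * ((∑ i, (y i - (∑ j, y j) / (N : ℝ)) ^ 2) / ((N : ℝ) - 1))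
          / ((2 : ℝ) ^ (2 * (K - 1)) * (r : ℝ)) := by
  classical
  set D := FactDesign N K r with hD
  set M : ℝ := (D.card : ℝ) with hMdef
  set i0 : Fin K := ⟨0, hK⟩ with hi0
  set c : (Fin K → Bool) → ℝ := fun z => if z i0 then 1 else -1 with hc
  set a : ℝ := ((2 : ℝ) ^ (K - 1))⁻¹ * (r : ℝ)⁻¹ with ha
  -- basic numerics
  have h2K : (2:ℕ) ^ K = 2 * 2 ^ (K - 1) := by
    conv_lhs => rw [← Nat.succ_pred_eq_of_pos hK]
    rw [pow_succ, Nat.pred_eq_sub_one]; ring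
  have hNge : 4 ≤ N := by
    have : 2 ^ K ≥ 2 := by
      calc 2 ^ K = 2 * 2 ^ (K-1) := h2K
        _ ≥ 2 * 1 := by have := Nat.one_le_two_pow (n := K - 1); omega
    calc N = r * 2 ^ K := hN
      _ ≥ 2 * 2 := Nat.mul_le_mul hr this
      _ = 4 := rfl
  have hN1 : ((N:ℝ) - 1) ≠ 0 := by
    have : (4:ℝ) ≤ (N:ℝ) := by exact_mod_cast hNge
    linarith
  have hr0 : (r:ℝ) ≠ 0 := by
    have : 0 < r := by omega
    exact_mod_cast this.ne'
  have hM0 : M ≠ 0 := by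
    have := fd_nonempty (N := N) (K := K) (r := r) hN
    have : 0 < D.card := card_pos.mpr this
    rw [hMdef]
    exact Nat.cast_ne_zero.mpr this.ne'
  have hc2 : ∀ z, c z * c z = 1 := by
    intro z; rw [hc]; by_cases h : z i0 <;> simp [h]
  have hcsum : ∑ z : Fin K → Bool, c z = 0 := by
    have hinv : Function.Involutive (fun z : Fin K → Bool => Function.update z i0 (!z i0)) := by
      intro z
      funext j
      by_cases h : j = i0
      · subst h; simp
      · simp [Function.update_of_ne h]
    have hneg : ∀ z, c ((Function.Involutive.toPerm _ hinv) z) = - c z := by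
      intro z
      rw [hc]
      simp only [Function.Involutive.coe_toPerm, Function.update_self]
      by_cases h : z i0 <;> simp [h]
    have hsum := Equiv.sum_comp (Function.Involutive.toPerm _ hinv) c
    rw [Finset.sum_congr rfl (fun z _ => hneg z)] at hsum
    rw [Finset.sum_neg_distrib] at hsum
    linarith
  have hrw : ∀ W, tauhatFact N K r hK y W = a * ∑ i, c (W i) * y i := by
    intro W
    unfold tauhatFact
    rw [ha, ← hi0]
    have step : ∀ z : Fin K → Bool,
        (if z i0 then (1:ℝ) else -1) * ((∑ i, if W i = z then y i else 0) / (r : ℝ))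
        = ∑ i, if W i = z then c (W i) * y i * (r:ℝ)⁻¹ else 0 := by
      intro z
      rw [div_eq_mul_inv, Finset.sum_mul, Finset.mul_sum]
      apply Finset.sum_congr rfl
      intro i _
      by_cases h : W i = z
      · simp only [h, if_true, hc]; ring
      · simp [h]
    rw [Finset.sum_congr rfl (fun z _ => step z), Finset.sum_comm]
    have inner : ∀ i, (∑ z : Fin K → Bool, if W i = z then c (W i) * y i * (r:ℝ)⁻¹ else 0)
        = c (W i) * y i * (r:ℝ)⁻¹ := by
      intro i
      rw [Finset.sum_ite_eq]
      simp
    rw [Finset.sum_congr rfl (fun i _ => inner i), ← Finset.sum_mul]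
    ring
  set z0 : Fin K → Bool := fun _ => false with hz0
  set z1 : Fin K → Bool := fun _ => true with hz1
  have hz01 : z0 ≠ z1 := by
    intro h
    have := congrFun h i0
    simp [hz0, hz1] at this
  have key : ∀ i : Fin N, ∑ W ∈ D, c (W i) = 0 := by
    intro i
    calc ∑ W ∈ D, c (W i)
        = ∑ W ∈ D, ∑ z : Fin K → Bool, if W i = z then c z else 0 := by
          apply Finset.sum_congr rfl; intro W _
          rw [Finset.sum_ite_eq]; simp
      _ = ∑ z : Fin K → Bool, ∑ W ∈ D, if W i = z then c z else 0 := Finset.sum_comm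
      _ = ∑ z : Fin K → Bool, (cnt N K r i z : ℝ) * c z := by
          apply Finset.sum_congr rfl; intro z _
          rw [Finset.sum_ite, Finset.sum_const, Finset.sum_const_zero, add_zero,
            nsmul_eq_mul]
          rfl
      _ = ∑ z : Fin K → Bool, (cnt N K r i z0 : ℝ) * c z := by
          apply Finset.sum_congr rfl; intro z _
          rw [cnt_eq i z z0]
      _ = (cnt N K r i z0 : ℝ) * ∑ z : Fin K → Bool, c z := by rw [Finset.mul_sum]
      _ = 0 := by rw [hcsum, mul_zero]
  have hEq0 : ∑ W ∈ D, (∑ i, c (W i) * y i) = 0 := by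
    rw [Finset.sum_comm]
    apply Finset.sum_eq_zero
    intro i _
    rw [← Finset.sum_mul, key i, zero_mul]
  have hsum0 : ∑ W ∈ D, tauhatFact N K r hK y W = 0 := by
    rw [Finset.sum_congr rfl (fun W _ => hrw W), ← Finset.mul_sum, hEq0, mul_zero]
  have part1 : factExp N K r (tauhatFact N K r hK y) = 0 := by
    unfold factExp
    rw [← hD, hsum0, zero_div]
  refine ⟨part1, ?_⟩
  -- variance part
  have hcast : ∀ n m : ℕ, n = m → (n:ℝ) = (m:ℝ) := fun n m h => by rw [h]
  have hT : ∀ i j : Fin N, i ≠ j →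
      ∑ W ∈ D, c (W i) * c (W j) = -(M/((N:ℝ)-1)) := by
    intro i j hij
    have hA : ((N:ℝ) - 1) * (cnt2 N K r i j z0 z0 : ℝ)
        = (cnt N K r i z0 : ℝ) * ((r:ℝ) - 1) := by
      have h := hcast _ _ (cnt2_same_eq (N:=N) (K:=K) (r:=r) hij z0)
      push_cast [Nat.cast_sub (by omega : 1 ≤ N), Nat.cast_sub (by omega : 1 ≤ r)] at h
      linarith [h]
    have hB : ((N:ℝ) - 1) * (cnt2 N K r i j z0 z1 : ℝ)
        = (cnt N K r i z0 : ℝ) * (r:ℝ) := by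
      have h := hcast _ _ (cnt2_diff_eq (N:=N) (K:=K) (r:=r) hij hz01)
      push_cast [Nat.cast_sub (by omega : 1 ≤ N)] at h
      linarith [h]
    have hJ : (2:ℝ)^K * (cnt N K r i z0 : ℝ) = M := by
      have h := hcast _ _ (J_mul_cnt (N:=N) (K:=K) (r:=r) i z0)
      push_cast at h
      exact h
    have expand : ∀ W : Fin N → (Fin K → Bool), c (W i) * c (W j)
        = ∑ z : Fin K → Bool, ∑ w : Fin K → Bool,
            if W i = z ∧ W j = w then c z * c w else 0 := by
      intro W
      simp [ite_and, Finset.sum_ite_eq]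
    calc ∑ W ∈ D, c (W i) * c (W j)
        = ∑ W ∈ D, ∑ z : Fin K → Bool, ∑ w : Fin K → Bool,
            if W i = z ∧ W j = w then c z * c w else 0 :=
          Finset.sum_congr rfl (fun W _ => expand W)
      _ = ∑ z : Fin K → Bool, ∑ W ∈ D, ∑ w : Fin K → Bool,
            if W i = z ∧ W j = w then c z * c w else 0 := Finset.sum_comm
      _ = ∑ z : Fin K → Bool, ∑ w : Fin K → Bool, ∑ W ∈ D,
            if W i = z ∧ W j = w then c z * c w else 0 :=
          Finset.sum_congr rfl (fun z _ => Finset.sum_comm)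
      _ = ∑ z : Fin K → Bool, ∑ w : Fin K → Bool,
            (cnt2 N K r i j z w : ℝ) * (c z * c w) := by
          apply Finset.sum_congr rfl; intro z _
          apply Finset.sum_congr rfl; intro w _
          rw [Finset.sum_ite, Finset.sum_const, Finset.sum_const_zero, add_zero,
            nsmul_eq_mul]
          rfl
      _ = ∑ z : Fin K → Bool,
            ((cnt2 N K r i j z0 z0 : ℝ) - (cnt2 N K r i j z0 z1 : ℝ)) := by
          apply Finset.sum_congr rfl; intro z _
          rw [← Finset.add_sum_erase _ _ (Finset.mem_univ z)]
          have h1 : (cnt2 N K r i j z z : ℝ) * (c z * c z)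
              = (cnt2 N K r i j z0 z0 : ℝ) := by
            rw [hc2 z, mul_one, cnt2_sameclass i j z z0]
          have h2 : ∑ w ∈ Finset.univ.erase z, (cnt2 N K r i j z w : ℝ) * (c z * c w)
              = (cnt2 N K r i j z0 z1 : ℝ) * (c z * ∑ w ∈ Finset.univ.erase z, c w) := by
            have h2a : ∀ w ∈ Finset.univ.erase z, (cnt2 N K r i j z w : ℝ) * (c z * c w)
                = (cnt2 N K r i j z0 z1 : ℝ) * (c z * c w) := by
              intro w hw
              have hwz : z ≠ w := fun h => (Finset.mem_erase.mp hw).1 h.symm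
              rw [cnt2_diffclass i j hwz hz01]
            rw [Finset.sum_congr rfl h2a, ← Finset.mul_sum, ← Finset.mul_sum]
          have h3 : ∑ w ∈ Finset.univ.erase z, c w = - c z := by
            have := Finset.add_sum_erase Finset.univ c (Finset.mem_univ z)
            rw [hcsum] at this
            linarith
          rw [h1, h2, h3]
          have := hc2 z
          nlinarith [hc2 z]
      _ = (2:ℝ)^K * ((cnt2 N K r i j z0 z0 : ℝ) - (cnt2 N K r i j z0 z1 : ℝ)) := by
          rw [Finset.sum_const, nsmul_eq_mul]
          congr 1
          simp
      _ = -(M/((N:ℝ)-1)) := by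
          have hgoal : ((N:ℝ)-1) * ((2:ℝ)^K *
                ((cnt2 N K r i j z0 z0 : ℝ) - (cnt2 N K r i j z0 z1 : ℝ)))
              = ((N:ℝ)-1) * (-(M/((N:ℝ)-1))) := by
            have hrhs : ((N:ℝ)-1) * (-(M/((N:ℝ)-1))) = -M := by field_simp
            rw [hrhs]
            linear_combination ((2:ℝ)^K) * hA - ((2:ℝ)^K) * hB - hJ
          exact mul_left_cancel₀ hN1 hgoal
  have hTdiag : ∀ i : Fin N, ∑ W ∈ D, c (W i) * c (W i) = M := by
    intro i
    rw [Finset.sum_congr rfl (fun W _ => hc2 (W i)), Finset.sum_const, nsmul_eq_mul,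
      mul_one]
  have hoffsum : ∑ i, ∑ j ∈ Finset.univ.erase i, y i * y j
      = (∑ i, y i)^2 - ∑ i, y i^2 := by
    have h1 : (∑ i, y i)^2 = ∑ i, ∑ j, y i * y j := by
      rw [sq, Finset.sum_mul_sum]
    have h2 : ∀ i : Fin N, (∑ j, y i * y j)
        = y i^2 + ∑ j ∈ Finset.univ.erase i, y i * y j := by
      intro i
      rw [← Finset.add_sum_erase _ _ (Finset.mem_univ i), sq]
    rw [h1, Finset.sum_congr rfl (fun i _ => h2 i), Finset.sum_add_distrib]
    ring
  have hS2 : ∑ W ∈ D, (∑ i, c (W i) * y i)^2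
      = M * (∑ i, y i^2) - M/((N:ℝ)-1) * ((∑ i, y i)^2 - ∑ i, y i^2) := by
    calc ∑ W ∈ D, (∑ i, c (W i) * y i)^2
        = ∑ W ∈ D, ∑ i, ∑ j, (c (W i) * c (W j)) * (y i * y j) := by
          apply Finset.sum_congr rfl; intro W _
          rw [sq, Finset.sum_mul_sum]
          apply Finset.sum_congr rfl; intro i _
          apply Finset.sum_congr rfl; intro j _
          ring
      _ = ∑ i, ∑ j, ∑ W ∈ D, (c (W i) * c (W j)) * (y i * y j) := by
          rw [Finset.sum_comm]
          apply Finset.sum_congr rfl; intro i _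
          rw [Finset.sum_comm]
      _ = ∑ i, ∑ j, (∑ W ∈ D, c (W i) * c (W j)) * (y i * y j) := by
          apply Finset.sum_congr rfl; intro i _
          apply Finset.sum_congr rfl; intro j _
          rw [Finset.sum_mul]
      _ = ∑ i, (M * y i^2 + (-(M/((N:ℝ)-1))) * ∑ j ∈ Finset.univ.erase i, y i * y j) := by
          apply Finset.sum_congr rfl; intro i _
          rw [← Finset.add_sum_erase _ _ (Finset.mem_univ i), hTdiag i]
          congr 1
          · rw [sq]
          · rw [Finset.mul_sum]
            apply Finset.sum_congr rfl; intro j hj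
            have hij : i ≠ j := fun h => (Finset.mem_erase.mp hj).1 h.symm
            rw [hT i j hij]
      _ = M * (∑ i, y i^2) + (-(M/((N:ℝ)-1))) * ∑ i, ∑ j ∈ Finset.univ.erase i, y i * y j := by
          rw [Finset.sum_add_distrib, ← Finset.mul_sum, ← Finset.mul_sum]
      _ = M * (∑ i, y i^2) - M/((N:ℝ)-1) * ((∑ i, y i)^2 - ∑ i, y i^2) := by
          rw [hoffsum]; ring
  have part2expr : factVar N K r (tauhatFact N K r hK y)
      = a^2 * (∑ W ∈ D, (∑ i, c (W i) * y i)^2) / M := by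
    unfold factVar
    rw [part1]
    unfold factExp
    rw [← hD]
    have hterm : ∀ W ∈ D, (tauhatFact N K r hK y W - 0)^2
        = a^2 * (∑ i, c (W i) * y i)^2 := by
      intro W _
      rw [sub_zero, hrw W, mul_pow]
    rw [Finset.sum_congr rfl hterm, ← Finset.mul_sum, mul_div_assoc]
  rw [part2expr, hS2]
  -- final algebra
  have hNR : (N:ℝ) = (r:ℝ) * 2^K := by
    rw [hN]; push_cast; ring
  have h2KR : (2:ℝ)^K = 2 * 2^(K-1) := by
    exact_mod_cast hcast _ _ h2K
  have hpow : (2:ℝ)^(2*(K-1)) = ((2:ℝ)^(K-1))^2 := by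
    rw [mul_comm, pow_mul]
  have hexp : ∑ i, (y i - (∑ j, y j)/(N:ℝ))^2
      = (∑ i, y i^2) - (∑ i, y i)^2/(N:ℝ) := by
    have hN0 : (N:ℝ) ≠ 0 := by
      have : (4:ℝ) ≤ (N:ℝ) := by exact_mod_cast hNge
      linarith
    have h1 : ∀ i ∈ (Finset.univ : Finset (Fin N)), (y i - (∑ j, y j)/(N:ℝ))^2
        = y i^2 - 2*((∑ j, y j)/(N:ℝ))*y i + ((∑ j, y j)/(N:ℝ))^2 := by
      intro i _; ring
    rw [Finset.sum_congr rfl h1, Finset.sum_add_distrib, Finset.sum_sub_distrib,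
      ← Finset.mul_sum, Finset.sum_const, Finset.card_univ, Fintype.card_fin,
      nsmul_eq_mul]
    field_simp
    ring
  rw [hexp, ha, hpow]
  have hG : ((2:ℝ)^(K-1)) ≠ 0 := by positivity
  have hN0 : (N:ℝ) ≠ 0 := by
    have : (4:ℝ) ≤ (N:ℝ) := by exact_mod_cast hNge
    linarith
  rw [hNR, h2KR] at hN1 ⊢
  field_simp
  have hX : (-1 + (r:ℝ) * 2 ^ (K - 1) * 2) ≠ 0 := by
    intro h; apply hN1; linarith
  have hXinv : (-1 + (r:ℝ) * 2 ^ (K - 1) * 2) * (-1 + (r:ℝ) * 2 ^ (K - 1) * 2)⁻¹ = 1 :=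
    mul_inv_cancel₀ hX
  linear_combination (-(∑ x, y x ^ 2)) * hXinv
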